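/- Let R be a commutative associative ℝ-algebra with unit and let l, n ≥ 1. An element of R^n[t₁,…,t_l][[e^{t₁},…,e^{t_l}]] is encoded as a function g from multi-indices d : (Fin l →₀ ℕ) to vectors of n polynomials in MvPolynomial (Fin l) R, and the operator ∂/∂t_i sends g to the function d ↦ pderiv i (g d) + (d i) • (g d). Let A₁, …, A_l be finitely supported functions from multi-indices (Fin l →₀ ℕ) to n×n matrices over R (representing matrices with entries polynomial in e^{t₁},…,e^{t_l}), and suppose: (a) for all i, j and every multi-index d, the convolution products agree: Σ_{d₁+d₂=d} A_i(d₁)·A_j(d₂) = Σ_{d₁+d₂=d} A_j(d₁)·A_i(d₂); (b) for all i, j and every multi-index d, (d i) • A_j(d) = (d j) • A_i(d); (c) for every i, the matrix A_i(0) is strictly lower triangular, and every multi-index d ≠ 0 with A_i(d) ≠ 0 satisfies d i > 0. Then for every vector v ∈ R^n there exists exactly one g as above satisfying, for all i and all multi-indices d, pderiv i (g d) + (d i) • (g d) = Σ_{d₁+d₂=d} A_i(d₁)·(g d₂) (matrix–vector multiplication, with matrix entries viewed as constant polynomials), and such that the constant coefficient (value under MvPolynomial.constantCoeff, applied entrywise)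 of g(0) equals v. -/

import Mathlib

open MvPolynomial

namespace Stmt4Aux

variable {R : Type*} [CommRing R] {l : ℕ}

/-- abbreviation for the elementary multi-index -/
noncomputable def eI (j : Fin l) : Fin l →₀ ℕ := Finsupp.single j (1:ℕ)

lemma eI_apply (j a : Fin l) : eI j a = if j = a then 1 else 0 := by
  simp [eI, Finsupp.single_apply]

lemma add_eI_sub (m : Fin l →₀ ℕ) (j : Fin l) : m + eI j - eI j = m := by
  ext a; simp [Finsupp.tsub_apply, Finsupp.add_apply]

lemma sub_eI_add (m : Fin l →₀ ℕ) (j : Fin l) (h : m j ≠ 0) : m - eI j + eI j = m := by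
  ext a; simp only [Finsupp.add_apply, Finsupp.tsub_apply, eI_apply]
  rcases eq_or_ne j a with rfl | hja
  · simp; omega
  · simp [hja]

lemma coeff_pderiv (p : MvPolynomial (Fin l) R) (j : Fin l) (m : Fin l →₀ ℕ) :
    coeff m (pderiv j p) = (m j + 1 : ℕ) * coeff (m + eI j) p := by
  induction p using MvPolynomial.induction_on' with
  | monomial s a =>
    rw [pderiv_monomial]
    show coeff m (monomial (s - eI j) (a * s j)) = _
    rw [coeff_monomial, coeff_monomial]
    by_cases h : s = m + eI j
    · subst h
      have h1 : m + eI j - eI j = m := add_eI_sub m j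
      have h2 : (m + eI j) j = m j + 1 := by
        simp [Finsupp.add_apply, eI_apply]
      rw [if_pos h1, h2]
      simp only [if_true]
      push_cast; ring
    · rw [if_neg h]
      by_cases hs : s j = 0
      · split_ifs with h'
        · simp [hs]
        · simp
      · have : s - eI j ≠ m := by
          intro he
          apply h
          rw [← he, sub_eI_add s j hs]
        rw [if_neg this, mul_zero]
  | add p q hp hq =>
    simp only [map_add, coeff_add, hp, hq]
    ring

lemma pderiv_comm (i j : Fin l) (p : MvPolynomial (Fin l) R) :
    pderiv i (pderiv j p) = pderiv j (pderiv i p) := by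
  rcases eq_or_ne i j with rfl | hij
  · rfl
  · induction p using MvPolynomial.induction_on' with
    | monomial s a =>
      rw [pderiv_monomial, pderiv_monomial, pderiv_monomial, pderiv_monomial]
      have h1 : ∀ (u v : Fin l) (t : Fin l →₀ ℕ), u ≠ v →
          (t - (Finsupp.single u 1 : Fin l →₀ ℕ)) v = t v := by
        intro u v t huv
        simp [Finsupp.tsub_apply, Finsupp.single_apply, huv]
      rw [h1 j i s (Ne.symm hij), h1 i j s hij]
      have h2 : s - Finsupp.single j 1 - Finsupp.single i 1
          = s - Finsupp.single i 1 - Finsupp.single j 1 := by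
        ext a; simp [Finsupp.tsub_apply]; omega
      rw [h2]
      ring_nf
    | add p q hp hq => simp [map_add, hp, hq]

lemma iterate_pderiv_zero (i : Fin l) (N : ℕ) :
    (pderiv (R := R) i)^[N] 0 = 0 :=
  Function.iterate_fixed (map_zero _) N

lemma iterate_pderiv_monomial_eq_zero (i : Fin l) :
    ∀ (N : ℕ) (s : Fin l →₀ ℕ) (a : R), s i < N →
      (pderiv i)^[N] (monomial s a) = 0 := by
  intro N
  induction N with
  | zero => intro s a h; omega
  | succ N ih =>
    intro s a h
    rw [Function.iterate_succ_apply, pderiv_monomial]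
    by_cases hs : s i = 0
    · rw [hs]
      push_cast
      rw [mul_zero, map_zero, iterate_pderiv_zero]
    · apply ih
      simp only [Finsupp.tsub_apply, Finsupp.single_apply, if_pos rfl, if_true]
      omega

lemma iterate_pderiv_eq_zero (i : Fin l) (p : MvPolynomial (Fin l) R) (N : ℕ)
    (h : p.totalDegree < N) : (pderiv i)^[N] p = 0 := by
  have hrw : ∀ q : MvPolynomial (Fin l) R,
      (pderiv i)^[N] q = (((pderiv (R := R) i : Derivation R _ _).toLinearMap :
        MvPolynomial (Fin l) R →ₗ[R] MvPolynomial (Fin l) R) ^ N) q := by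
    intro q; rw [Module.End.pow_apply]; rfl
  rw [hrw, ← p.support_sum_monomial_coeff, map_sum]
  apply Finset.sum_eq_zero
  intro m hm
  rw [← hrw]
  apply iterate_pderiv_monomial_eq_zero
  calc m i ≤ m.sum fun _ e => e := by
        by_cases hmi : m i = 0
        · omega
        · have : i ∈ m.support := Finsupp.mem_support_iff.mpr hmi
          exact Finset.single_le_sum (fun a _ => Nat.zero_le _) this
    _ ≤ p.totalDegree := MvPolynomial.le_totalDegree hm
    _ < N := h

lemma iterate_pderiv_eq_zero' (i : Fin l) (p : MvPolynomial (Fin l) R) {N M : ℕ}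
    (h : p.totalDegree < N) (hNM : N ≤ M) : (pderiv i)^[M] p = 0 := by
  obtain ⟨k, rfl⟩ := Nat.exists_eq_add_of_le hNM
  rw [add_comm, Function.iterate_add_apply, iterate_pderiv_eq_zero i p N h,
    iterate_pderiv_zero]

lemma eq_C_of_pderiv_eq_zero [Algebra ℝ R] (p : MvPolynomial (Fin l) R)
    (h : ∀ j, pderiv j p = 0) : p = C (constantCoeff p) := by
  apply MvPolynomial.ext
  intro m
  rcases eq_or_ne m 0 with rfl | hm
  · simp [coeff_C, constantCoeff_eq]
  · obtain ⟨j, hj⟩ := Finsupp.ne_iff.mp hm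
    simp only [Finsupp.coe_zero, Pi.zero_apply] at hj
    have key := coeff_pderiv p j (m - eI j)
    rw [h j] at key
    rw [sub_eI_add m j hj] at key
    have hmj : (m - eI j) j + 1 = m j := by
      simp only [Finsupp.tsub_apply, eI_apply, if_pos rfl, if_true]
      omega
    rw [hmj] at key
    simp only [coeff_zero] at key
    have hunit : IsUnit ((m j : ℕ) : R) := by
      have h2 : ((m j : ℕ) : R) = algebraMap ℝ R (m j : ℝ) := by
        rw [map_natCast]
      rw [h2]
      apply IsUnit.map
      exact isUnit_iff_ne_zero.mpr (by exact_mod_cast hj)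
    have hz := hunit.mul_right_eq_zero.mp key.symm
    rw [hz, coeff_C, if_neg (by exact fun hc => hm hc.symm)]



section SLT
variable {S : Type*} [CommRing S] {n : ℕ}

/-- `PropK k M` : entries `M a b` vanish unless `b + k ≤ a`. -/
def PropK (k : ℕ) (M : Matrix (Fin n) (Fin n) S) : Prop :=
  ∀ a b : Fin n, (a : ℕ) < (b : ℕ) + k → M a b = 0

lemma propK_of_slt {M : Matrix (Fin n) (Fin n) S} (h : ∀ a b : Fin n, a ≤ b → M a b = 0) :
    PropK 1 M := by
  intro a b hab
  exact h a b (by omega)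

lemma propK_mul {k m : ℕ} {M N : Matrix (Fin n) (Fin n) S}
    (hM : PropK k M) (hN : PropK m N) : PropK (k + m) (M * N) := by
  intro a b hab
  rw [Matrix.mul_apply]
  apply Finset.sum_eq_zero
  intro c _
  by_cases h1 : (a : ℕ) < (c : ℕ) + k
  · rw [hM a c h1, zero_mul]
  · rw [hN c b (by omega), mul_zero]

lemma propK_pow {M : Matrix (Fin n) (Fin n) S} (h : PropK 1 M) (k : ℕ) :
    PropK k (M ^ k) := by
  induction k with
  | zero =>
    intro a b hab
    rw [pow_zero]
    exact Matrix.one_apply_ne (by omega : a ≠ b)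
  | succ k ih =>
    rw [pow_succ]
    exact propK_mul ih h

lemma propK_n_eq_zero {M : Matrix (Fin n) (Fin n) S} (h : PropK n M) : M = 0 := by
  ext a b
  exact h a b (by omega)

lemma slt_pow_n {M : Matrix (Fin n) (Fin n) S} (h : ∀ a b : Fin n, a ≤ b → M a b = 0) :
    M ^ n = 0 :=
  propK_n_eq_zero (propK_pow (propK_of_slt h) n)

lemma slt_mul_pow {M N : Matrix (Fin n) (Fin n) S} (hn : 1 ≤ n)
    (hM : ∀ a b : Fin n, a ≤ b → M a b = 0) (hN : ∀ a b : Fin n, a ≤ b → N a b = 0) :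
    M * N ^ (n - 1) = 0 := by
  apply propK_n_eq_zero
  have := propK_mul (propK_of_slt hM) (propK_pow (propK_of_slt hN) (n-1))
  have h1 : 1 + (n - 1) = n := by omega
  rwa [h1] at this

end SLT


variable {R : Type*} [CommRing R] {l n : ℕ}

/-- componentwise partial derivative on vectors of polynomials -/
noncomputable def DV (i : Fin l) :
    (Fin n → MvPolynomial (Fin l) R) →ₗ[R] (Fin n → MvPolynomial (Fin l) R) where
  toFun w := fun k => pderiv i (w k)
  map_add' w₁ w₂ := by funext k; simp
  map_smul' c w := by funext k; simp

/-- multiplication by a constant (in `R`) matrix -/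
noncomputable def BV (M : Matrix (Fin n) (Fin n) R) :
    (Fin n → MvPolynomial (Fin l) R) →ₗ[R] (Fin n → MvPolynomial (Fin l) R) where
  toFun w := (M.map C).mulVec w
  map_add' w₁ w₂ := Matrix.mulVec_add _ w₁ w₂
  map_smul' c w := by
    funext k
    simp only [Matrix.mulVec, dotProduct, RingHom.id_apply, Pi.smul_apply,
      Finset.smul_sum]
    exact Finset.sum_congr rfl fun b _ => (Algebra.mul_smul_comm c _ _)

/-- the operator `B - D` -/
noncomputable def NL (i : Fin l) (M : Matrix (Fin n) (Fin n) R) :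
    (Fin n → MvPolynomial (Fin l) R) →ₗ[R] (Fin n → MvPolynomial (Fin l) R) :=
  BV M - DV i

lemma DV_apply (i : Fin l) (w : Fin n → MvPolynomial (Fin l) R) (k : Fin n) :
    DV i w k = pderiv i (w k) := rfl

lemma BV_apply (M : Matrix (Fin n) (Fin n) R) (w : Fin n → MvPolynomial (Fin l) R) :
    BV (l := l) M w = (M.map C).mulVec w := rfl

lemma NL_apply (i : Fin l) (M : Matrix (Fin n) (Fin n) R)
    (w : Fin n → MvPolynomial (Fin l) R) :
    NL i M w = BV M w - DV i w := rfl

lemma BV_BV (M N : Matrix (Fin n) (Fin n) R) (w : Fin n → MvPolynomial (Fin l) R) :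
    BV M (BV N w) = BV (M * N) w := by
  rw [BV_apply, BV_apply, BV_apply, Matrix.mulVec_mulVec,
    show (M * N).map (C : R →+* MvPolynomial (Fin l) R) = M.map C * N.map C from
      Matrix.map_mul]

lemma BV_zero_mat (w : Fin n → MvPolynomial (Fin l) R) :
    BV (l := l) (0 : Matrix (Fin n) (Fin n) R) w = 0 := by
  rw [BV_apply]
  have : (0 : Matrix (Fin n) (Fin n) R).map (C : R →+* MvPolynomial (Fin l) R) = 0 := by
    ext a b; simp
  rw [this, Matrix.zero_mulVec]

lemma BV_add_mat (M N : Matrix (Fin n) (Fin n) R) (w : Fin n → MvPolynomial (Fin l) R) :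
    BV (l := l) (M + N) w = BV M w + BV N w := by
  rw [BV_apply, BV_apply, BV_apply]
  have : (M + N).map (C : R →+* MvPolynomial (Fin l) R) = M.map C + N.map C := by
    ext a b; simp
  rw [this, Matrix.add_mulVec]

lemma BV_sum_mat {α : Type*} (s : Finset α) (F : α → Matrix (Fin n) (Fin n) R)
    (w : Fin n → MvPolynomial (Fin l) R) :
    BV (l := l) (∑ a ∈ s, F a) w = ∑ a ∈ s, BV (F a) w := by
  classical
  induction s using Finset.induction_on with
  | empty => simp [BV_zero_mat]
  | insert a s h ih =>
    rw [Finset.sum_insert h, Finset.sum_insert h, BV_add_mat, ih]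

lemma BV_nsmul_mat (c : ℕ) (M : Matrix (Fin n) (Fin n) R) (w : Fin n → MvPolynomial (Fin l) R) :
    BV (l := l) (c • M) w = c • BV M w := by
  rw [BV_apply, BV_apply]
  funext k
  simp only [Matrix.mulVec, dotProduct, Pi.smul_apply, Finset.smul_sum]
  apply Finset.sum_congr rfl
  intro b _
  simp only [Matrix.map_apply, Matrix.smul_apply]
  rw [map_nsmul, smul_mul_assoc]

lemma DV_BV_comm (i : Fin l) (M : Matrix (Fin n) (Fin n) R)
    (w : Fin n → MvPolynomial (Fin l) R) :
    DV i (BV M w) = BV M (DV i w) := by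
  funext k
  rw [DV_apply, BV_apply, BV_apply]
  simp only [Matrix.mulVec, dotProduct]
  rw [map_sum (pderiv i)]
  apply Finset.sum_congr rfl
  intro b _
  simp only [Matrix.map_apply]
  rw [DV_apply]
  exact pderiv_C_mul

lemma commute_BV_DV (i : Fin l) (M : Matrix (Fin n) (Fin n) R) :
    Commute (BV (l := l) M) (DV i) :=
  LinearMap.ext fun w => (DV_BV_comm i M w).symm

lemma BV_pow (M : Matrix (Fin n) (Fin n) R) (k : ℕ) (w : Fin n → MvPolynomial (Fin l) R) :
    ((BV (l := l) M) ^ k) w = BV (M ^ k) w := by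
  induction k generalizing w with
  | zero =>
    rw [pow_zero, pow_zero, Module.End.one_apply, BV_apply]
    have : (1 : Matrix (Fin n) (Fin n) R).map (C : R →+* MvPolynomial (Fin l) R) = 1 := by
      ext a c; by_cases h : a = c <;> simp [Matrix.one_apply, h]
    rw [this, Matrix.one_mulVec]
  | succ k ih =>
    rw [pow_succ, pow_succ, Module.End.mul_apply, ih, BV_BV]

lemma DV_pow (i : Fin l) (k : ℕ) (w : Fin n → MvPolynomial (Fin l) R) (b : Fin n) :
    ((DV (n := n) (R := R) i) ^ k) w b = (pderiv i)^[k] (w b) := by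
  induction k generalizing w with
  | zero => rfl
  | succ k ih =>
    rw [pow_succ, Module.End.mul_apply, ih, DV_apply, ← Function.iterate_succ_apply]

/-- a degree bound for a vector of polynomials -/
noncomputable def degBound (w : Fin n → MvPolynomial (Fin l) R) : ℕ :=
  (Finset.univ.sup fun k => (w k).totalDegree) + 1

lemma DV_pow_eq_zero (i : Fin l) (w : Fin n → MvPolynomial (Fin l) R) {m : ℕ}
    (h : degBound w ≤ m) : ((DV (n := n) (R := R) i) ^ m) w = 0 := by
  funext b
  rw [DV_pow]
  show _ = (0 : Fin n → MvPolynomial (Fin l) R) b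
  rw [Pi.zero_apply]
  apply iterate_pderiv_eq_zero' i (w b) (N := degBound w) _ h
  have : (w b).totalDegree ≤ Finset.univ.sup fun k => (w k).totalDegree :=
    Finset.le_sup (f := fun k => (w k).totalDegree) (Finset.mem_univ b)
  unfold degBound
  omega

lemma Npow_eq_zero (i : Fin l) (M : Matrix (Fin n) (Fin n) R) (hM : M ^ n = 0)
    (w : Fin n → MvPolynomial (Fin l) R) {k : ℕ} (hk : n + degBound w ≤ k) :
    ((NL i M) ^ k) w = 0 := by
  have hcomm : Commute (BV (l := l) M) (-(DV (R := R) (l := l) (n := n) i)) :=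
    (commute_BV_DV i M).neg_right
  rw [NL, sub_eq_add_neg, hcomm.add_pow]
  rw [LinearMap.sum_apply]
  apply Finset.sum_eq_zero
  intro m hm
  rw [Finset.mem_range] at hm
  rw [Module.End.mul_apply, Module.End.mul_apply]
  by_cases hmn : n ≤ m
  · have hMm : M ^ m = 0 := by
      obtain ⟨j, rfl⟩ := Nat.exists_eq_add_of_le hmn
      rw [pow_add, hM, zero_mul]
    rw [BV_pow, hMm, BV_zero_mat]
  · have h1 : ((Nat.choose k m : Module.End R (Fin n → MvPolynomial (Fin l) R))) w
        = (Nat.choose k m) • w := Module.End.natCast_apply _ _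
    rw [h1]
    have h2 : ((-DV (n := n) (R := R) i) ^ (k - m)) ((Nat.choose k m) • w)
        = (Nat.choose k m) • (((-DV (n := n) (R := R) i) ^ (k - m)) w) :=
      map_nsmul _ _ _
    rw [h2]
    have h3 : ((-DV (n := n) (R := R) i) ^ (k - m)) w = 0 := by
      have e := neg_pow (DV (R := R) (l := l) (n := n) i) (k - m)
      rw [e, Module.End.mul_apply, DV_pow_eq_zero i w (by omega), map_zero]
    rw [h3, smul_zero, map_zero]

variable [Algebra ℝ R]

/-- inverse of a positive natural number in `R` -/
noncomputable def epsR (R : Type*) [CommRing R] [Algebra ℝ R] (c : ℕ) : R :=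
  algebraMap ℝ R ((c : ℝ))⁻¹

lemma epsR_mul_cast {c : ℕ} (hc : 0 < c) : (epsR R c) * (c : R) = 1 := by
  have h1 : ((c : ℕ) : R) = algebraMap ℝ R (c : ℝ) := by rw [map_natCast]
  rw [epsR, h1, ← map_mul, inv_mul_cancel₀ (by exact_mod_cast hc.ne'), map_one]

/-- explicit solution operator for `(c - (B - D)) u = w` -/
noncomputable def solveOp (i : Fin l) (c : ℕ) (M : Matrix (Fin n) (Fin n) R)
    (w : Fin n → MvPolynomial (Fin l) R) : Fin n → MvPolynomial (Fin l) R :=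
  ∑ k ∈ Finset.range (n + degBound w), (epsR R c) ^ (k + 1) • (((NL i M) ^ k) w)

lemma solveOp_spec (i : Fin l) {c : ℕ} (hc : 0 < c) (M : Matrix (Fin n) (Fin n) R)
    (hM : M ^ n = 0) (w : Fin n → MvPolynomial (Fin l) R) :
    (c : R) • solveOp i c M w = (NL i M) (solveOp i c M w) + w := by
  set N := NL i M with hN
  set K := n + degBound w with hK
  set ε := epsR R c with hε
  have key : ∀ k, (c : R) • (ε ^ (k+1) • ((N ^ k) w)) = ε ^ k • ((N ^ k) w) := by
    intro k
    rw [smul_smul, pow_succ', ← mul_assoc, mul_comm (c : R) ε, epsR_mul_cast hc, one_mul]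
  have h1 : (c : R) • solveOp i c M w = ∑ k ∈ Finset.range K, ε ^ k • ((N ^ k) w) := by
    rw [solveOp, Finset.smul_sum]
    exact Finset.sum_congr rfl fun k _ => key k
  have h2 : N (solveOp i c M w) = ∑ k ∈ Finset.range K, ε ^ (k+1) • ((N ^ (k+1)) w) := by
    rw [solveOp, map_sum]
    apply Finset.sum_congr rfl
    intro k _
    rw [map_smul]
    congr 1
    rw [pow_succ', Module.End.mul_apply]
  have h3 : (c : R) • solveOp i c M w - N (solveOp i c M w) = w := by
    rw [h1, h2, ← Finset.sum_sub_distrib]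
    have heq : ∀ k ∈ Finset.range K,
        ε ^ k • ((N ^ k) w) - ε ^ (k+1) • ((N ^ (k+1)) w)
        = (fun k => ε ^ k • ((N ^ k) w)) k - (fun k => ε ^ k • ((N ^ k) w)) (k+1) := by
      intro k _; rfl
    rw [Finset.sum_congr rfl heq, Finset.sum_range_sub']
    simp only [pow_zero, one_smul, Module.End.one_apply]
    rw [Npow_eq_zero i M hM w (le_refl K), smul_zero, sub_zero]
  rw [sub_eq_iff_eq_add.mp h3, add_comm]

lemma solve_unique (i : Fin l) {c : ℕ} (hc : 0 < c) (M : Matrix (Fin n) (Fin n) R)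
    (hM : M ^ n = 0) {u : Fin n → MvPolynomial (Fin l) R}
    (h : (c : R) • u = (NL i M) u) : u = 0 := by
  set N := NL i M with hN
  set ε := epsR R c with hε
  have h0 : ε • ((c : R) • u) = u := by
    rw [smul_smul, epsR_mul_cast hc, one_smul]
  have hstep : u = ε • N u := by
    calc u = ε • ((c : R) • u) := h0.symm
      _ = ε • N u := by rw [h]
  have hiter : ∀ k, u = ε ^ k • ((N ^ k) u) := by
    intro k
    induction k with
    | zero => simp
    | succ k ih =>
      calc u = ε ^ k • ((N ^ k) u) := ih
        _ = ε ^ k • ((N ^ k) (ε • N u)) := by rw [← hstep]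
        _ = ε ^ (k+1) • ((N ^ (k+1)) u) := by
            rw [map_smul, smul_smul, pow_succ, pow_succ, Module.End.mul_apply]
  have hfin := hiter (n + degBound u)
  rw [Npow_eq_zero i M hM u (le_refl _), smul_zero] at hfin
  exact hfin


section Emat

variable {R : Type*} [CommRing R] [Algebra ℝ R] {l n : ℕ}
variable (A : Fin l → ((Fin l →₀ ℕ) →₀ Matrix (Fin n) (Fin n) R))

/-- entrywise partial derivative of a polynomial matrix -/
noncomputable def pdMat (j : Fin l) (M : Matrix (Fin n) (Fin n) (MvPolynomial (Fin l) R)) :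
    Matrix (Fin n) (Fin n) (MvPolynomial (Fin l) R) :=
  M.map (pderiv j)

lemma pdMat_apply (j : Fin l) (M : Matrix (Fin n) (Fin n) (MvPolynomial (Fin l) R))
    (a b : Fin n) : pdMat j M a b = pderiv j (M a b) := rfl

lemma pdMat_mul (j : Fin l) (M N : Matrix (Fin n) (Fin n) (MvPolynomial (Fin l) R)) :
    pdMat j (M * N) = pdMat j M * N + M * pdMat j N := by
  refine Matrix.ext fun a b => ?_
  simp only [pdMat_apply, Matrix.mul_apply, Matrix.add_apply]
  rw [map_sum (pderiv j), ← Finset.sum_add_distrib]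
  apply Finset.sum_congr rfl
  intro c _
  rw [pderiv_mul]

lemma pdMat_add (j : Fin l) (M N : Matrix (Fin n) (Fin n) (MvPolynomial (Fin l) R)) :
    pdMat j (M + N) = pdMat j M + pdMat j N := by
  refine Matrix.ext fun a b => ?_
  simp only [pdMat_apply, Matrix.add_apply, map_add]

lemma pdMat_one (j : Fin l) :
    pdMat (R := R) (n := n) j 1 = 0 := by
  refine Matrix.ext fun a b => ?_
  by_cases h : a = b <;> simp [pdMat_apply, Matrix.one_apply, h, pderiv_one]

lemma pdMat_smul_C (j : Fin l) (c : R) (M : Matrix (Fin n) (Fin n) (MvPolynomial (Fin l) R)) :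
    pdMat j ((C c : MvPolynomial (Fin l) R) • M) = (C c : MvPolynomial (Fin l) R) • pdMat j M := by
  refine Matrix.ext fun a b => ?_
  simp only [pdMat_apply, Matrix.smul_apply, smul_eq_mul]
  exact pderiv_C_mul

/-- `Mt A = ∑ j, t_j A_j(0)` -/
noncomputable def Mt : Matrix (Fin n) (Fin n) (MvPolynomial (Fin l) R) :=
  ∑ j : Fin l, (X j : MvPolynomial (Fin l) R) • ((A j 0).map C)

lemma Mt_apply (a b : Fin n) :
    Mt A a b = ∑ j : Fin l, (X j : MvPolynomial (Fin l) R) * C (A j 0 a b) := by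
  rw [Mt]
  rw [Matrix.sum_apply]
  apply Finset.sum_congr rfl
  intro j' _
  rw [Matrix.smul_apply, Matrix.map_apply, smul_eq_mul]

lemma Mt_entry_eq (a b : Fin n) :
    Mt A a b = ∑ j : Fin l, (X j : MvPolynomial (Fin l) R) * C (A j 0 a b) := Mt_apply A a b

lemma pdMat_Mt (j : Fin l) : pdMat j (Mt A) = (A j 0).map C := by
  refine Matrix.ext fun a b => ?_
  rw [pdMat_apply, Mt_apply, map_sum (pderiv j)]
  rw [Finset.sum_eq_single j]
  · rw [pderiv_mul, pderiv_X_self, one_mul, pderiv_C, mul_zero, add_zero]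
    rfl
  · intro j' _ hj'
    rw [pderiv_mul, pderiv_X_of_ne hj', zero_mul, pderiv_C, mul_zero, add_zero]
  · intro h
    exact absurd (Finset.mem_univ j) h

lemma A0_comm (ha : ∀ i j (d : Fin l →₀ ℕ),
      ∑ p ∈ Finset.HasAntidiagonal.antidiagonal d, A i p.1 * A j p.2
        = ∑ p ∈ Finset.HasAntidiagonal.antidiagonal d, A j p.1 * A i p.2) (i j : Fin l) :
    A i 0 * A j 0 = A j 0 * A i 0 := by
  have := ha i j 0
  rwa [Finsupp.antidiagonal_zero, Finset.sum_singleton, Finset.sum_singleton] at this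

lemma A0_comm_Mt (ha : ∀ i j (d : Fin l →₀ ℕ),
      ∑ p ∈ Finset.HasAntidiagonal.antidiagonal d, A i p.1 * A j p.2
        = ∑ p ∈ Finset.HasAntidiagonal.antidiagonal d, A j p.1 * A i p.2) (j : Fin l) :
    ((A j 0).map (C : R →+* MvPolynomial (Fin l) R)) * Mt A
      = Mt A * ((A j 0).map C) := by
  rw [Mt, Finset.mul_sum, Finset.sum_mul]
  apply Finset.sum_congr rfl
  intro j' _
  rw [Matrix.mul_smul, Matrix.smul_mul]
  congr 1
  rw [← Matrix.map_mul, ← Matrix.map_mul, A0_comm A ha j j']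

lemma pdMat_Mt_pow (ha : ∀ i j (d : Fin l →₀ ℕ),
      ∑ p ∈ Finset.HasAntidiagonal.antidiagonal d, A i p.1 * A j p.2
        = ∑ p ∈ Finset.HasAntidiagonal.antidiagonal d, A j p.1 * A i p.2) (j : Fin l) :
    ∀ k : ℕ, pdMat j ((Mt A) ^ (k+1)) = (k+1) • (((A j 0).map C) * (Mt A) ^ k) := by
  intro k
  induction k with
  | zero =>
    rw [pow_one, pow_zero, mul_one, pdMat_Mt]
    simp
  | succ k ih =>
    rw [pow_succ', pdMat_mul, pdMat_Mt, ih]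
    have h1 : Mt A * ((k+1) • (((A j 0).map C) * (Mt A) ^ k))
        = (k+1) • (((A j 0).map C) * (Mt A) ^ (k+1)) := by
      rw [Matrix.mul_smul]
      congr 1
      rw [← mul_assoc, ← A0_comm_Mt A ha j, mul_assoc, ← pow_succ']
    rw [h1]
    have h2 : (k+1+1) • (((A j 0).map (C : R →+* MvPolynomial (Fin l) R)) * (Mt A) ^ (k+1))
        = ((A j 0).map (C : R →+* MvPolynomial (Fin l) R)) * (Mt A) ^ (k+1)
          + (k+1) • (((A j 0).map (C : R →+* MvPolynomial (Fin l) R)) * (Mt A) ^ (k+1)) := by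
      rw [add_nsmul, one_nsmul, add_comm]
    rw [h2]

/-- the coefficient `1/k!` -/
noncomputable def cK (k : ℕ) : MvPolynomial (Fin l) R :=
  C (algebraMap ℝ R ((k.factorial : ℝ))⁻¹)

lemma cK_zero : (cK 0 : MvPolynomial (Fin l) R) = 1 := by
  simp [cK]

lemma cK_succ (k : ℕ) :
    ((k+1 : ℕ) : MvPolynomial (Fin l) R) * cK (k+1) = (cK k : MvPolynomial (Fin l) R) := by
  have h1 : ((k+1 : ℕ) : MvPolynomial (Fin l) R) = C (algebraMap ℝ R ((k+1 : ℕ) : ℝ)) := by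
    rw [map_natCast, map_natCast]
  rw [h1, cK, cK, ← map_mul, ← map_mul]
  congr 2
  rw [Nat.factorial_succ]
  push_cast
  have hk : (k.factorial : ℝ) ≠ 0 := by exact_mod_cast k.factorial_ne_zero
  field_simp

lemma pdMat_smul_cK (j : Fin l) (k : ℕ) (M : Matrix (Fin n) (Fin n) (MvPolynomial (Fin l) R)) :
    pdMat j ((cK k : MvPolynomial (Fin l) R) • M) = (cK k : MvPolynomial (Fin l) R) • pdMat j M := by
  simp only [cK]
  exact pdMat_smul_C j _ M

/-- exponential `exp(∑ t_j A_j(0))`, a polynomial matrix -/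
noncomputable def Emat : Matrix (Fin n) (Fin n) (MvPolynomial (Fin l) R) :=
  ∑ k ∈ Finset.range n, (cK k : MvPolynomial (Fin l) R) • (Mt A) ^ k

lemma slt_MtA (hc1 : ∀ i (a b : Fin n), a ≤ b → A i 0 a b = 0) :
    ∀ a b : Fin n, a ≤ b → Mt A a b = 0 := by
  intro a b hab
  rw [Mt_apply]
  apply Finset.sum_eq_zero
  intro j _
  rw [hc1 j a b hab, map_zero, mul_zero]

lemma slt_A0C (i : Fin l) (hc1 : ∀ i (a b : Fin n), a ≤ b → A i 0 a b = 0) :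
    ∀ a b : Fin n, a ≤ b → ((A i 0).map (C : R →+* MvPolynomial (Fin l) R)) a b = 0 := by
  intro a b hab
  rw [Matrix.map_apply, hc1 i a b hab, map_zero]

lemma pdMat_Emat (hn : 1 ≤ n)
    (ha : ∀ i j (d : Fin l →₀ ℕ),
      ∑ p ∈ Finset.HasAntidiagonal.antidiagonal d, A i p.1 * A j p.2
        = ∑ p ∈ Finset.HasAntidiagonal.antidiagonal d, A j p.1 * A i p.2)
    (hc1 : ∀ i (a b : Fin n), a ≤ b → A i 0 a b = 0) (j : Fin l) :
    pdMat j (Emat A) = ((A j 0).map C) * Emat A := by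
  obtain ⟨m, rfl⟩ : ∃ m, n = m + 1 := ⟨n - 1, by omega⟩
  have hlin : pdMat j (Emat A) = ∑ k ∈ Finset.range (m+1),
      (cK k : MvPolynomial (Fin l) R) • pdMat j ((Mt A) ^ k) := by
    rw [Emat]
    have : ∀ (s : Finset ℕ), pdMat j (∑ k ∈ s, (cK k : MvPolynomial (Fin l) R) • (Mt A) ^ k)
        = ∑ k ∈ s, (cK k : MvPolynomial (Fin l) R) • pdMat j ((Mt A) ^ k) := by
      intro s
      classical
      induction s using Finset.induction_on with
      | empty =>
        refine Matrix.ext fun a b => ?_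
        simp [pdMat_apply]
      | insert a s h ih =>
        rw [Finset.sum_insert h, Finset.sum_insert h, pdMat_add, pdMat_smul_cK, ih]
    exact this _
  rw [hlin, Finset.sum_range_succ']
  have h0 : (cK 0 : MvPolynomial (Fin l) R) • pdMat j ((Mt A) ^ 0) = 0 := by
    rw [pow_zero, pdMat_one, smul_zero]
  rw [h0, add_zero]
  have hterm : ∀ k, (cK (k+1) : MvPolynomial (Fin l) R) • pdMat j ((Mt A) ^ (k+1))
      = (cK k : MvPolynomial (Fin l) R) • (((A j 0).map C) * (Mt A) ^ k) := by
    intro k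
    rw [pdMat_Mt_pow A ha j k]
    rw [← Nat.cast_smul_eq_nsmul (MvPolynomial (Fin l) R) (k+1)]
    rw [smul_smul, mul_comm (cK (k+1) : MvPolynomial (Fin l) R)
      (((k+1 : ℕ)) : MvPolynomial (Fin l) R), cK_succ]
  rw [Finset.sum_congr rfl fun k _ => hterm k]
  -- now RHS
  rw [Emat, Finset.mul_sum, Finset.sum_range_succ]
  have hlast : ((A j 0).map (C : R →+* MvPolynomial (Fin l) R)) *
      ((cK m : MvPolynomial (Fin l) R) • (Mt A) ^ m) = 0 := by
    rw [Matrix.mul_smul]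
    have : ((A j 0).map (C : R →+* MvPolynomial (Fin l) R)) * (Mt A) ^ m = 0 := by
      have := slt_mul_pow (M := (A j 0).map (C : R →+* MvPolynomial (Fin l) R))
        (N := Mt A) (by omega) (slt_A0C A j hc1) (slt_MtA A hc1)
      simpa using this
    rw [this, smul_zero]
  rw [hlast, add_zero]
  apply Finset.sum_congr rfl
  intro k _
  rw [Matrix.mul_smul]

end Emat

section G0

variable {R : Type*} [CommRing R] [Algebra ℝ R] {l n : ℕ}
variable (A : Fin l → ((Fin l →₀ ℕ) →₀ Matrix (Fin n) (Fin n) R)) (v : Fin n → R)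

/-- the solution at degree `0` -/
noncomputable def g0 : Fin n → MvPolynomial (Fin l) R :=
  (Emat A).mulVec (fun b => C (v b))

lemma DV_g0 (hn : 1 ≤ n)
    (ha : ∀ i j (d : Fin l →₀ ℕ),
      ∑ p ∈ Finset.HasAntidiagonal.antidiagonal d, A i p.1 * A j p.2
        = ∑ p ∈ Finset.HasAntidiagonal.antidiagonal d, A j p.1 * A i p.2)
    (hc1 : ∀ i (a b : Fin n), a ≤ b → A i 0 a b = 0) (j : Fin l) :
    DV j (g0 A v) = BV (A j 0) (g0 A v) := by
  funext k
  rw [DV_apply, BV_apply, g0]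
  have h1 : pderiv j ((Emat A).mulVec (fun b => (C (v b) : MvPolynomial (Fin l) R)) k)
      = ((pdMat j (Emat A)).mulVec (fun b => (C (v b) : MvPolynomial (Fin l) R))) k := by
    simp only [Matrix.mulVec, dotProduct]
    rw [map_sum (pderiv j)]
    apply Finset.sum_congr rfl
    intro b _
    rw [pderiv_mul, pderiv_C, mul_zero, add_zero, pdMat_apply]
  rw [h1, pdMat_Emat A hn ha hc1 j, ← Matrix.mulVec_mulVec]

lemma cc_g0 (hn : 1 ≤ n) :
    (fun k => constantCoeff (g0 A v k)) = v := by
  have hccMt : (Mt A).map (constantCoeff : MvPolynomial (Fin l) R →+* R) = 0 := by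
    refine Matrix.ext fun a b => ?_
    rw [Matrix.map_apply, Mt_apply, map_sum]
    apply Finset.sum_eq_zero
    intro j _
    rw [map_mul, constantCoeff_X, zero_mul]
  have hccMtPow : ∀ k : ℕ,
      ((Mt A) ^ (k+1)).map (constantCoeff : MvPolynomial (Fin l) R →+* R) = 0 := by
    intro k
    induction k with
    | zero => rw [pow_one, hccMt]
    | succ k ih =>
      rw [pow_succ, Matrix.map_mul, ih, Matrix.zero_mul]
  have hccE : (Emat A).map (constantCoeff : MvPolynomial (Fin l) R →+* R) = 1 := by
    obtain ⟨m, rfl⟩ : ∃ m, n = m + 1 := ⟨n - 1, by omega⟩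
    refine Matrix.ext fun a b => ?_
    rw [Matrix.map_apply, Emat, Matrix.sum_apply, map_sum, Finset.sum_range_succ']
    have hz : ∀ k ∈ Finset.range m,
        constantCoeff (((cK (k+1) : MvPolynomial (Fin l) R) • (Mt A) ^ (k+1)) a b) = 0 := by
      intro k _
      rw [Matrix.smul_apply, smul_eq_mul, map_mul]
      have : constantCoeff (((Mt A) ^ (k+1)) a b) = 0 := by
        have := congrFun (congrFun (hccMtPow k) a) b
        rwa [Matrix.map_apply, Matrix.zero_apply] at this
      rw [this, mul_zero]
    rw [Finset.sum_eq_zero hz, zero_add, Matrix.smul_apply, smul_eq_mul, map_mul, pow_zero]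
    rw [cK_zero, map_one, one_mul]
    by_cases h : a = b <;> simp [Matrix.one_apply, h]
  funext k
  rw [g0]
  simp only [Matrix.mulVec, dotProduct]
  rw [map_sum]
  have : ∀ b, constantCoeff ((Emat A) k b * C (v b)) = (1 : Matrix (Fin n) (Fin n) R) k b * v b := by
    intro b
    rw [map_mul, constantCoeff_C]
    have := congrFun (congrFun hccE k) b
    rw [Matrix.map_apply] at this
    rw [this]
  rw [Finset.sum_congr rfl fun b _ => this b]
  rw [show ∑ b : Fin n, (1 : Matrix (Fin n) (Fin n) R) k b * v b
    = (1 : Matrix (Fin n) (Fin n) R).mulVec v k from rfl, Matrix.one_mulVec]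

end G0

section Sums

variable {l : ℕ}

/-- total weight of a multi-index -/
def wt (d : Fin l →₀ ℕ) : ℕ := ∑ a : Fin l, d a

lemma wt_add (a b : Fin l →₀ ℕ) : wt (a + b) = wt a + wt b := by
  rw [wt, wt, wt, ← Finset.sum_add_distrib]
  apply Finset.sum_congr rfl
  intro x _
  rfl

lemma wt_pos {d : Fin l →₀ ℕ} (hd : d ≠ 0) : 0 < wt d := by
  obtain ⟨a, ha⟩ := Finsupp.ne_iff.mp hd
  simp only [Finsupp.coe_zero, Pi.zero_apply] at ha
  calc 0 < d a := Nat.pos_of_ne_zero ha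
    _ ≤ wt d := Finset.single_le_sum (fun x _ => Nat.zero_le _) (Finset.mem_univ a)

lemma wt_lt_of_mem_filter {d : Fin l →₀ ℕ} {p : (Fin l →₀ ℕ) × (Fin l →₀ ℕ)}
    (hp : p ∈ (Finset.HasAntidiagonal.antidiagonal d).filter (fun p => p.1 ≠ 0)) : wt p.2 < wt d := by
  rw [Finset.mem_filter, Finset.HasAntidiagonal.mem_antidiagonal] at hp
  obtain ⟨h1, h2⟩ := hp
  rw [← h1, wt_add]
  have := wt_pos h2
  omega

lemma filter_fst_eq_zero (d : Fin l →₀ ℕ) :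
    (Finset.HasAntidiagonal.antidiagonal d).filter (fun p => p.1 = 0) = {((0 : Fin l →₀ ℕ), d)} := by
  ext p
  rw [Finset.mem_filter, Finset.HasAntidiagonal.mem_antidiagonal, Finset.mem_singleton]
  constructor
  · rintro ⟨h1, h2⟩
    have : p.2 = d := by rw [← h1, h2, zero_add]
    exact Prod.ext h2 this
  · rintro rfl
    exact ⟨zero_add d, rfl⟩

lemma sum_antidiagonal_split {M : Type*} [AddCommMonoid M] (d : Fin l →₀ ℕ)
    (F : (Fin l →₀ ℕ) × (Fin l →₀ ℕ) → M) :
    ∑ p ∈ Finset.HasAntidiagonal.antidiagonal d, F p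
      = F (0, d) + ∑ p ∈ (Finset.HasAntidiagonal.antidiagonal d).filter (fun p => p.1 ≠ 0), F p := by
  classical
  rw [← Finset.sum_filter_add_sum_filter_not (Finset.HasAntidiagonal.antidiagonal d) (fun p => p.1 = 0) F]
  congr 1
  rw [filter_fst_eq_zero, Finset.sum_singleton]

lemma fst_weight_eq {d : Fin l →₀ ℕ} {p : (Fin l →₀ ℕ) × (Fin l →₀ ℕ)}
    (hp : p ∈ Finset.HasAntidiagonal.antidiagonal d) (j : Fin l) : d j = p.1 j + p.2 j := by
  rw [Finset.HasAntidiagonal.mem_antidiagonal] at hp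
  rw [← hp]
  rfl

/-- associativity reindexing for double antidiagonal sums -/
lemma sum_antidiag_assoc {M : Type*} [AddCommMonoid M] (d : Fin l →₀ ℕ)
    (F : (Fin l →₀ ℕ) → (Fin l →₀ ℕ) → (Fin l →₀ ℕ) → M) :
    ∑ p ∈ Finset.HasAntidiagonal.antidiagonal d, ∑ q ∈ Finset.HasAntidiagonal.antidiagonal p.2, F p.1 q.1 q.2
      = ∑ p ∈ Finset.HasAntidiagonal.antidiagonal d, ∑ q ∈ Finset.HasAntidiagonal.antidiagonal p.1, F q.1 q.2 p.2 := by
  classical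
  rw [Finset.sum_sigma', Finset.sum_sigma']
  apply Finset.sum_nbij'
    (i := fun x => (⟨(x.1.1 + x.2.1, x.2.2), (x.1.1, x.2.1)⟩ :
      (Σ _p : (Fin l →₀ ℕ) × (Fin l →₀ ℕ), (Fin l →₀ ℕ) × (Fin l →₀ ℕ))))
    (j := fun x => (⟨(x.2.1, x.2.2 + x.1.2), (x.2.2, x.1.2)⟩ :
      (Σ _p : (Fin l →₀ ℕ) × (Fin l →₀ ℕ), (Fin l →₀ ℕ) × (Fin l →₀ ℕ))))
  · intro x hx
    rw [Finset.mem_sigma, Finset.HasAntidiagonal.mem_antidiagonal, Finset.HasAntidiagonal.mem_antidiagonal] at hx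
    obtain ⟨h1, h2⟩ := hx
    rw [Finset.mem_sigma]
    refine ⟨?_, ?_⟩
    · rw [Finset.HasAntidiagonal.mem_antidiagonal]
      show x.1.1 + x.2.1 + x.2.2 = d
      rw [add_assoc, h2, h1]
    · rw [Finset.HasAntidiagonal.mem_antidiagonal]
  · intro x hx
    rw [Finset.mem_sigma, Finset.HasAntidiagonal.mem_antidiagonal, Finset.HasAntidiagonal.mem_antidiagonal] at hx
    obtain ⟨h1, h2⟩ := hx
    rw [Finset.mem_sigma]
    refine ⟨?_, ?_⟩
    · rw [Finset.HasAntidiagonal.mem_antidiagonal]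
      show x.2.1 + (x.2.2 + x.1.2) = d
      rw [← add_assoc, h2, h1]
    · rw [Finset.HasAntidiagonal.mem_antidiagonal]
  · intro x hx
    rw [Finset.mem_sigma, Finset.HasAntidiagonal.mem_antidiagonal, Finset.HasAntidiagonal.mem_antidiagonal] at hx
    obtain ⟨h1, h2⟩ := hx
    rcases x with ⟨⟨pa, pb⟩, ⟨qa, qb⟩⟩
    simp only at h1 h2 ⊢
    subst h2
    rfl
  · intro x hx
    rw [Finset.mem_sigma, Finset.HasAntidiagonal.mem_antidiagonal, Finset.HasAntidiagonal.mem_antidiagonal] at hx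
    obtain ⟨h1, h2⟩ := hx
    rcases x with ⟨⟨pa, pb⟩, ⟨qa, qb⟩⟩
    simp only at h1 h2 ⊢
    subst h2
    rfl
  · intro x hx
    rfl

end Sums

section Main

variable {R : Type*} [CommRing R] [Algebra ℝ R] {l n : ℕ}
variable (A : Fin l → ((Fin l →₀ ℕ) →₀ Matrix (Fin n) (Fin n) R)) (v : Fin n → R)

lemma DV_DV_comm (i j : Fin l) (x : Fin n → MvPolynomial (Fin l) R) :
    DV i (DV j x) = DV j (DV i x) := by
  funext k
  rw [DV_apply, DV_apply, DV_apply, DV_apply]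
  exact pderiv_comm i j (x k)

/-- swap of the two first order operators -/
lemma op_swap (i j : Fin l) (ci cj : ℕ) (x : Fin n → MvPolynomial (Fin l) R) :
    DV i (DV j x + (cj : R) • x) + (ci : R) • (DV j x + (cj : R) • x)
      = DV j (DV i x + (ci : R) • x) + (cj : R) • (DV i x + (ci : R) • x) := by
  rw [map_add, map_add, map_smul, map_smul, DV_DV_comm]
  rw [smul_add, smul_add, smul_smul, smul_smul, mul_comm (ci : R) (cj : R)]
  abel

/-- termwise expansion identity -/
lemma term_expand (i' : Fin l) (M : Matrix (Fin n) (Fin n) R) (a b : ℕ)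
    (x : Fin n → MvPolynomial (Fin l) R) :
    DV i' (BV M x) + ((a + b : ℕ) : R) • BV M x
      = BV M (DV i' x + (b : R) • x) + (a : R) • BV M x := by
  rw [DV_BV_comm, map_add, map_smul, Nat.cast_add, add_smul]
  abel

/-- expansion of the operator applied to a convolution sum -/
lemma expand_sum (i' u : Fin l) (gg : (Fin l →₀ ℕ) → Fin n → MvPolynomial (Fin l) R)
    (d : Fin l →₀ ℕ) :
    DV i' (∑ p ∈ Finset.HasAntidiagonal.antidiagonal d, BV (A u p.1) (gg p.2))
        + ((d i' : ℕ) : R) • ∑ p ∈ Finset.HasAntidiagonal.antidiagonal d, BV (A u p.1) (gg p.2)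
      = (∑ p ∈ Finset.HasAntidiagonal.antidiagonal d,
          BV (A u p.1) (DV i' (gg p.2) + ((p.2 i' : ℕ) : R) • gg p.2))
        + ∑ p ∈ Finset.HasAntidiagonal.antidiagonal d, ((p.1 i' : ℕ) : R) • BV (A u p.1) (gg p.2) := by
  rw [map_sum, Finset.smul_sum, ← Finset.sum_add_distrib, ← Finset.sum_add_distrib]
  apply Finset.sum_congr rfl
  intro p hp
  rw [show (d i' : ℕ) = (p.1 i' + p.2 i' : ℕ) from fst_weight_eq hp i']
  exact term_expand i' (A u p.1) (p.1 i') (p.2 i') (gg p.2)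

/-- the `ha`-based symmetry of double convolution sums -/
lemma double_conv_symm
    (ha : ∀ i j (d : Fin l →₀ ℕ),
      ∑ p ∈ Finset.HasAntidiagonal.antidiagonal d, A i p.1 * A j p.2
        = ∑ p ∈ Finset.HasAntidiagonal.antidiagonal d, A j p.1 * A i p.2)
    (u u' : Fin l) (gg : (Fin l →₀ ℕ) → Fin n → MvPolynomial (Fin l) R) (d : Fin l →₀ ℕ) :
    ∑ p ∈ Finset.HasAntidiagonal.antidiagonal d,
        BV (A u p.1) (∑ q ∈ Finset.HasAntidiagonal.antidiagonal p.2, BV (A u' q.1) (gg q.2))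
      = ∑ p ∈ Finset.HasAntidiagonal.antidiagonal d,
          BV (A u' p.1) (∑ q ∈ Finset.HasAntidiagonal.antidiagonal p.2, BV (A u q.1) (gg q.2)) := by
  have canon : ∀ w w' : Fin l,
      ∑ p ∈ Finset.HasAntidiagonal.antidiagonal d,
        BV (A w p.1) (∑ q ∈ Finset.HasAntidiagonal.antidiagonal p.2, BV (A w' q.1) (gg q.2))
      = ∑ p ∈ Finset.HasAntidiagonal.antidiagonal d,
          BV (∑ q ∈ Finset.HasAntidiagonal.antidiagonal p.1, A w q.1 * A w' q.2) (gg p.2) := by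
    intro w w'
    have step1 : ∀ p : (Fin l →₀ ℕ) × (Fin l →₀ ℕ),
        BV (A w p.1) (∑ q ∈ Finset.HasAntidiagonal.antidiagonal p.2, BV (A w' q.1) (gg q.2))
        = ∑ q ∈ Finset.HasAntidiagonal.antidiagonal p.2, BV (A w p.1 * A w' q.1) (gg q.2) := by
      intro p
      rw [map_sum]
      exact Finset.sum_congr rfl fun q _ => BV_BV _ _ _
    rw [Finset.sum_congr rfl fun p _ => step1 p]
    rw [sum_antidiag_assoc d (fun a b c => BV (A w a * A w' b) (gg c))]
    apply Finset.sum_congr rfl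
    intro p _
    rw [BV_sum_mat]
  rw [canon u u', canon u' u]
  apply Finset.sum_congr rfl
  intro p _
  rw [ha u u' p.1]

/-- the `hb`-based symmetry -/
lemma weight_symm
    (hb : ∀ i j (d : Fin l →₀ ℕ), (d i) • A j d = (d j) • A i d)
    (u u' : Fin l) (gg : (Fin l →₀ ℕ) → Fin n → MvPolynomial (Fin l) R) (d : Fin l →₀ ℕ) :
    ∑ p ∈ Finset.HasAntidiagonal.antidiagonal d, ((p.1 u' : ℕ) : R) • BV (A u p.1) (gg p.2)
      = ∑ p ∈ Finset.HasAntidiagonal.antidiagonal d, ((p.1 u : ℕ) : R) • BV (A u' p.1) (gg p.2) := by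
  apply Finset.sum_congr rfl
  intro p _
  rw [Nat.cast_smul_eq_nsmul, Nat.cast_smul_eq_nsmul, ← BV_nsmul_mat, ← BV_nsmul_mat]
  rw [hb u' u p.1]

/-- the solution, defined by well-founded recursion on the weight -/
noncomputable def gsol : (Fin l →₀ ℕ) → Fin n → MvPolynomial (Fin l) R := fun d =>
  if hd : d = 0 then g0 A v
  else
    let i := (Finsupp.ne_iff.mp hd).choose
    solveOp i (d i) (A i 0)
      (∑ p ∈ ((Finset.HasAntidiagonal.antidiagonal d).filter (fun p => p.1 ≠ 0)).attach,
        BV (A i p.1.1) (gsol p.1.2))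
termination_by d => wt d
decreasing_by exact wt_lt_of_mem_filter p.2

lemma gsol_zero : gsol A v 0 = g0 A v := by
  rw [gsol]
  simp

lemma gsol_ne {d : Fin l →₀ ℕ} (hd : d ≠ 0) :
    gsol A v d = solveOp ((Finsupp.ne_iff.mp hd).choose)
      (d ((Finsupp.ne_iff.mp hd).choose)) (A ((Finsupp.ne_iff.mp hd).choose) 0)
      (∑ p ∈ (Finset.HasAntidiagonal.antidiagonal d).filter (fun p => p.1 ≠ 0),
        BV (A ((Finsupp.ne_iff.mp hd).choose) p.1) (gsol A v p.2)) := by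
  rw [gsol, dif_neg hd]
  show solveOp ((Finsupp.ne_iff.mp hd).choose) (d ((Finsupp.ne_iff.mp hd).choose))
      (A ((Finsupp.ne_iff.mp hd).choose) 0)
      (∑ p ∈ ((Finset.HasAntidiagonal.antidiagonal d).filter (fun p => p.1 ≠ 0)).attach,
        BV (A ((Finsupp.ne_iff.mp hd).choose) p.1.1) (gsol A v p.1.2)) = _
  exact congrArg
    (solveOp ((Finsupp.ne_iff.mp hd).choose) (d ((Finsupp.ne_iff.mp hd).choose))
      (A ((Finsupp.ne_iff.mp hd).choose) 0))
    (Finset.sum_attach ((Finset.HasAntidiagonal.antidiagonal d).filter (fun p => p.1 ≠ 0))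
      (fun p => BV (A ((Finsupp.ne_iff.mp hd).choose) p.1) (gsol A v p.2)))

lemma choose_pos {d : Fin l →₀ ℕ} (hd : d ≠ 0) : 0 < d ((Finsupp.ne_iff.mp hd).choose) := by
  have := (Finsupp.ne_iff.mp hd).choose_spec
  simp only [Finsupp.coe_zero, Pi.zero_apply] at this
  exact Nat.pos_of_ne_zero this

set_option maxHeartbeats 1000000 in
lemma gsol_satisfies (hn : 1 ≤ n)
    (ha : ∀ i j (d : Fin l →₀ ℕ),
      ∑ p ∈ Finset.HasAntidiagonal.antidiagonal d, A i p.1 * A j p.2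
        = ∑ p ∈ Finset.HasAntidiagonal.antidiagonal d, A j p.1 * A i p.2)
    (hb : ∀ i j (d : Fin l →₀ ℕ), (d i) • A j d = (d j) • A i d)
    (hc1 : ∀ i (a b : Fin n), a ≤ b → A i 0 a b = 0) :
    ∀ (d : Fin l →₀ ℕ) (j : Fin l),
      DV j (gsol A v d) + ((d j : ℕ) : R) • gsol A v d
        = ∑ p ∈ Finset.HasAntidiagonal.antidiagonal d, BV (A j p.1) (gsol A v p.2) := by
  have main : ∀ N : ℕ, ∀ d : Fin l →₀ ℕ, wt d < N → ∀ j : Fin l,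
      DV j (gsol A v d) + ((d j : ℕ) : R) • gsol A v d
        = ∑ p ∈ Finset.HasAntidiagonal.antidiagonal d, BV (A j p.1) (gsol A v p.2) := by
    intro N
    induction N with
    | zero => intro d h; omega
    | succ N ihN =>
      intro d hdN j
      by_cases hd : d = 0
      · subst hd
        rw [Finsupp.antidiagonal_zero, Finset.sum_singleton]
        rw [gsol_zero]
        have hz : (((0 : Fin l →₀ ℕ) j : ℕ) : R) = 0 := by simp
        rw [hz, zero_smul, add_zero]
        exact DV_g0 A v hn ha hc1 j
      · -- the inductive case
        set i := (Finsupp.ne_iff.mp hd).choose with hidef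
        have hpos : 0 < d i := choose_pos hd
        have hAn : (A i 0) ^ n = 0 := slt_pow_n (fun a b hab => hc1 i a b hab)
        set w : Fin n → MvPolynomial (Fin l) R :=
          ∑ p ∈ (Finset.HasAntidiagonal.antidiagonal d).filter (fun p => p.1 ≠ 0),
            BV (A i p.1) (gsol A v p.2) with hwdef
        have hgd : gsol A v d = solveOp i (d i) (A i 0) w := gsol_ne A v hd
        -- the equation for the chosen index i
        have Hi : DV i (gsol A v d) + ((d i : ℕ) : R) • gsol A v d
            = ∑ p ∈ Finset.HasAntidiagonal.antidiagonal d, BV (A i p.1) (gsol A v p.2) := by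
          have hsp := solveOp_spec i hpos (A i 0) hAn w
          rw [← hgd, NL_apply] at hsp
          rw [sum_antidiagonal_split d (fun p => BV (A i p.1) (gsol A v p.2)), ← hwdef]
          calc DV i (gsol A v d) + ((d i : ℕ) : R) • gsol A v d
              = DV i (gsol A v d)
                + (BV (A i 0) (gsol A v d) - DV i (gsol A v d) + w) := by rw [← hsp]
            _ = BV (A i 0) (gsol A v d) + w := by abel
        -- induction hypothesis for smaller multi-indices
        have IH : ∀ p ∈ (Finset.HasAntidiagonal.antidiagonal d).filter (fun p => p.1 ≠ 0), ∀ j' : Fin l,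
            DV j' (gsol A v p.2) + ((p.2 j' : ℕ) : R) • gsol A v p.2
              = ∑ q ∈ Finset.HasAntidiagonal.antidiagonal p.2, BV (A j' q.1) (gsol A v q.2) := by
          intro p hp j'
          exact ihN p.2 (by have := wt_lt_of_mem_filter hp; omega) j'
        -- all-p version for the operator Y = D_i + (· i)
        have hYall : ∀ p ∈ Finset.HasAntidiagonal.antidiagonal d,
            DV i (gsol A v p.2) + ((p.2 i : ℕ) : R) • gsol A v p.2
              = ∑ q ∈ Finset.HasAntidiagonal.antidiagonal p.2, BV (A i q.1) (gsol A v q.2) := by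
          intro p hp
          by_cases hp1 : p.1 = 0
          · have hp2 : p.2 = d := by
              have := Finset.HasAntidiagonal.mem_antidiagonal.mp hp
              rw [hp1, zero_add] at this
              exact this
            rw [hp2]
            exact Hi
          · exact IH p (Finset.mem_filter.mpr ⟨hp, hp1⟩) i
        -- abbreviations
        set g := gsol A v with hgdef
        set Sj : Fin n → MvPolynomial (Fin l) R :=
          ∑ p ∈ Finset.HasAntidiagonal.antidiagonal d, BV (A j p.1) (g p.2) with hSj
        set Xd : Fin n → MvPolynomial (Fin l) R :=
          DV j (g d) + ((d j : ℕ) : R) • g d with hXd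
        -- goal : Xd = Sj
        -- T2 : expansion of (D_i + d_i) Sj
        have T2 : DV i Sj + ((d i : ℕ) : R) • Sj
            = (∑ p ∈ Finset.HasAntidiagonal.antidiagonal d,
                BV (A j p.1) (∑ q ∈ Finset.HasAntidiagonal.antidiagonal p.2, BV (A i q.1) (g q.2)))
              + ∑ p ∈ Finset.HasAntidiagonal.antidiagonal d, ((p.1 i : ℕ) : R) • BV (A j p.1) (g p.2) := by
          rw [hSj, expand_sum A i j g d]
          congr 1
          apply Finset.sum_congr rfl
          intro p hp
          rw [hYall p hp]
        -- T1 : expansion of (D_i + d_i) Xd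
        have T1 : DV i Xd + ((d i : ℕ) : R) • Xd
            = BV (A i 0) (Xd - Sj)
              + ((∑ p ∈ Finset.HasAntidiagonal.antidiagonal d,
                  BV (A i p.1) (∑ q ∈ Finset.HasAntidiagonal.antidiagonal p.2, BV (A j q.1) (g q.2)))
                + ∑ p ∈ Finset.HasAntidiagonal.antidiagonal d, ((p.1 j : ℕ) : R) • BV (A i p.1) (g p.2)) := by
          rw [hXd, op_swap i j (d i) (d j) (g d), Hi, expand_sum A j i g d]
          -- first summand : split according to p.1 = 0
          have split1 : ∑ p ∈ Finset.HasAntidiagonal.antidiagonal d,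
              BV (A i p.1) (DV j (g p.2) + ((p.2 j : ℕ) : R) • g p.2)
              = BV (A i 0) (Xd - Sj)
                + ∑ p ∈ Finset.HasAntidiagonal.antidiagonal d,
                    BV (A i p.1) (∑ q ∈ Finset.HasAntidiagonal.antidiagonal p.2, BV (A j q.1) (g q.2)) := by
            rw [sum_antidiagonal_split d
              (fun p => BV (A i p.1) (DV j (g p.2) + ((p.2 j : ℕ) : R) • g p.2))]
            rw [sum_antidiagonal_split d
              (fun p => BV (A i p.1) (∑ q ∈ Finset.HasAntidiagonal.antidiagonal p.2, BV (A j q.1) (g q.2)))]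
            have hfil : ∑ p ∈ (Finset.HasAntidiagonal.antidiagonal d).filter (fun p => p.1 ≠ 0),
                BV (A i p.1) (DV j (g p.2) + ((p.2 j : ℕ) : R) • g p.2)
                = ∑ p ∈ (Finset.HasAntidiagonal.antidiagonal d).filter (fun p => p.1 ≠ 0),
                    BV (A i p.1) (∑ q ∈ Finset.HasAntidiagonal.antidiagonal p.2, BV (A j q.1) (g q.2)) := by
              apply Finset.sum_congr rfl
              intro p hp
              rw [IH p hp j]
            rw [hfil]
            have hzero : BV (A i 0) (DV j (g d) + ((d j : ℕ) : R) • g d)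
                = BV (A i 0) (Xd - Sj)
                  + BV (A i 0) (∑ q ∈ Finset.HasAntidiagonal.antidiagonal d, BV (A j q.1) (g q.2)) := by
              rw [← map_add, ← hSj, ← hXd]
              rw [sub_add_cancel]
            rw [hzero]
            abel
          rw [split1]
          abel
        -- combine
        have hr : DV i (Xd - Sj) + ((d i : ℕ) : R) • (Xd - Sj) = BV (A i 0) (Xd - Sj) := by
          rw [map_sub, smul_sub]
          have hcomb : DV i Xd + ((d i : ℕ) : R) • Xd - (DV i Sj + ((d i : ℕ) : R) • Sj)
              = BV (A i 0) (Xd - Sj) := by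
            rw [T1, T2]
            rw [double_conv_symm A ha i j g d]
            rw [weight_symm A hb i j g d]
            abel
          calc DV i Xd - DV i Sj + (((d i : ℕ) : R) • Xd - ((d i : ℕ) : R) • Sj)
              = DV i Xd + ((d i : ℕ) : R) • Xd - (DV i Sj + ((d i : ℕ) : R) • Sj) := by abel
            _ = BV (A i 0) (Xd - Sj) := hcomb
        have hfinal : Xd - Sj = 0 := by
          apply solve_unique i hpos (A i 0) hAn
          rw [NL_apply]
          calc ((d i : ℕ) : R) • (Xd - Sj)
              = DV i (Xd - Sj) + ((d i : ℕ) : R) • (Xd - Sj) - DV i (Xd - Sj) := by abel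
            _ = BV (A i 0) (Xd - Sj) - DV i (Xd - Sj) := by rw [hr]
        exact sub_eq_zero.mp hfinal
  intro d j
  exact main (wt d + 1) d (by omega) j

/-- solutions with zero constant term of the degree-zero equation vanish -/
lemma zero_of_deg_zero_eq (hc1 : ∀ i (a b : Fin n), a ≤ b → A i 0 a b = 0)
    {h : Fin n → MvPolynomial (Fin l) R}
    (heq : ∀ j, DV j h = BV (A j 0) h)
    (hcc : ∀ k, constantCoeff (h k) = 0) : h = 0 := by
  have key : ∀ m : ℕ, ∀ k : Fin n, (k : ℕ) < m → h k = 0 := by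
    intro m
    induction m with
    | zero => intro k hk; omega
    | succ m ihm =>
      intro k hk
      have hder : ∀ j, pderiv j (h k) = 0 := by
        intro j
        have := congrFun (heq j) k
        rw [DV_apply, BV_apply] at this
        rw [this]
        simp only [Matrix.mulVec, dotProduct]
        apply Finset.sum_eq_zero
        intro b _
        by_cases hkb : k ≤ b
        · rw [Matrix.map_apply, hc1 j k b hkb, map_zero, zero_mul]
        · have hbk : (b : ℕ) < (k : ℕ) := by
            have := lt_of_not_ge hkb
            exact this
          rw [ihm b (by omega), mul_zero]
      have := eq_C_of_pderiv_eq_zero (h k) hder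
      rw [this, hcc k, map_zero]
  funext k
  exact key n k k.isLt

end Main

section Final

variable {R : Type*} [CommRing R] [Algebra ℝ R] {l n : ℕ}
variable (A : Fin l → ((Fin l →₀ ℕ) →₀ Matrix (Fin n) (Fin n) R))

lemma form_iff (g : (Fin l →₀ ℕ) → Fin n → MvPolynomial (Fin l) R) (j : Fin l)
    (d : Fin l →₀ ℕ) :
    ((fun k => pderiv j (g d k) + (d j) • g d k)
        = ∑ p ∈ Finset.HasAntidiagonal.antidiagonal d, ((A j p.1).map C).mulVec (g p.2))
    ↔ DV j (g d) + ((d j : ℕ) : R) • g d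
        = ∑ p ∈ Finset.HasAntidiagonal.antidiagonal d, BV (A j p.1) (g p.2) := by
  have h1 : (fun k => pderiv j (g d k) + (d j) • g d k)
      = DV j (g d) + ((d j : ℕ) : R) • g d := by
    funext k
    simp only [Pi.add_apply, Pi.smul_apply, DV_apply, Nat.cast_smul_eq_nsmul]
  have h2 : (∑ p ∈ Finset.HasAntidiagonal.antidiagonal d, ((A j p.1).map C).mulVec (g p.2))
      = ∑ p ∈ Finset.HasAntidiagonal.antidiagonal d, BV (A j p.1) (g p.2) :=
    Finset.sum_congr rfl fun p _ => rfl
  rw [h1, h2]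

end Final

end Stmt4Aux

open Stmt4Aux MvPolynomial in
/-- Proposition 4.2: existence and uniqueness of solutions of the PDE system
`∂g/∂t_i = A_i g` in `R^n[t₁,…,t_l][[e^{t₁},…,e^{t_l}]]` with prescribed
constant coefficient of `g 0`, under the commutation, symmetry and
triangularity assumptions (a), (b), (c). -/
theorem stmt_4 (R : Type*) [CommRing R] [Algebra ℝ R] (l n : ℕ) (hl : 1 ≤ l) (hn : 1 ≤ n)
    (A : Fin l → ((Fin l →₀ ℕ) →₀ Matrix (Fin n) (Fin n) R))
    (ha : ∀ i j (d : Fin l →₀ ℕ),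
      ∑ p ∈ Finset.HasAntidiagonal.antidiagonal d, A i p.1 * A j p.2
        = ∑ p ∈ Finset.HasAntidiagonal.antidiagonal d, A j p.1 * A i p.2)
    (hb : ∀ i j (d : Fin l →₀ ℕ), (d i) • A j d = (d j) • A i d)
    (hc1 : ∀ i (a b : Fin n), a ≤ b → A i 0 a b = 0)
    (hc2 : ∀ i (d : Fin l →₀ ℕ), d ≠ 0 → A i d ≠ 0 → 0 < d i)
    (v : Fin n → R) :
    ∃! g : (Fin l →₀ ℕ) → Fin n → MvPolynomial (Fin l) R,
      (∀ i (d : Fin l →₀ ℕ),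
        (fun k => MvPolynomial.pderiv i (g d k) + (d i) • g d k)
          = ∑ p ∈ Finset.HasAntidiagonal.antidiagonal d, ((A i p.1).map MvPolynomial.C).mulVec (g p.2))
      ∧ (fun k => MvPolynomial.constantCoeff (g 0 k)) = v := by
  classical
  refine ⟨gsol A v, ⟨?_, ?_⟩, ?_⟩
  · intro i d
    rw [form_iff A (gsol A v) i d]
    exact gsol_satisfies A v hn ha hb hc1 d i
  · rw [gsol_zero]
    exact cc_g0 A v hn
  · rintro g' ⟨h1', h2'⟩
    have hsat' : ∀ (d : Fin l →₀ ℕ) (j : Fin l),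
        DV j (g' d) + ((d j : ℕ) : R) • g' d
          = ∑ p ∈ Finset.HasAntidiagonal.antidiagonal d, BV (A j p.1) (g' p.2) :=
      fun d j => (form_iff A g' j d).mp (h1' j d)
    have hsat : ∀ (d : Fin l →₀ ℕ) (j : Fin l),
        DV j (gsol A v d) + ((d j : ℕ) : R) • gsol A v d
          = ∑ p ∈ Finset.HasAntidiagonal.antidiagonal d, BV (A j p.1) (gsol A v p.2) :=
      gsol_satisfies A v hn ha hb hc1
    have main : ∀ N : ℕ, ∀ d : Fin l →₀ ℕ, wt d < N → g' d = gsol A v d := by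
      intro N
      induction N with
      | zero => intro d h; omega
      | succ N ihN =>
        intro d hdN
        have hsub : ∀ j : Fin l,
            DV j (g' d - gsol A v d) + ((d j : ℕ) : R) • (g' d - gsol A v d)
              = BV (A j 0) (g' d - gsol A v d) := by
          intro j
          have e1 := hsat' d j
          have e2 := hsat d j
          rw [sum_antidiagonal_split d (fun p => BV (A j p.1) (g' p.2))] at e1
          rw [sum_antidiagonal_split d (fun p => BV (A j p.1) (gsol A v p.2))] at e2
          have hfil : ∑ p ∈ (Finset.HasAntidiagonal.antidiagonal d).filter (fun p => p.1 ≠ 0),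
              BV (A j p.1) (g' p.2)
              = ∑ p ∈ (Finset.HasAntidiagonal.antidiagonal d).filter (fun p => p.1 ≠ 0),
                  BV (A j p.1) (gsol A v p.2) := by
            apply Finset.sum_congr rfl
            intro p hp
            have hlt := wt_lt_of_mem_filter hp
            rw [ihN p.2 (by omega)]
          rw [map_sub, smul_sub]
          calc DV j (g' d) - DV j (gsol A v d)
                + (((d j : ℕ) : R) • g' d - ((d j : ℕ) : R) • gsol A v d)
              = (DV j (g' d) + ((d j : ℕ) : R) • g' d)
                - (DV j (gsol A v d) + ((d j : ℕ) : R) • gsol A v d) := by abel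
            _ = (BV (A j 0) (g' d)
                + ∑ p ∈ (Finset.HasAntidiagonal.antidiagonal d).filter (fun p => p.1 ≠ 0),
                    BV (A j p.1) (g' p.2))
                - (BV (A j 0) (gsol A v d)
                + ∑ p ∈ (Finset.HasAntidiagonal.antidiagonal d).filter (fun p => p.1 ≠ 0),
                    BV (A j p.1) (gsol A v p.2)) := by rw [e1, e2]
            _ = BV (A j 0) (g' d) - BV (A j 0) (gsol A v d) := by rw [hfil]; abel
            _ = BV (A j 0) (g' d - gsol A v d) := (map_sub _ _ _).symm
        by_cases hd : d = 0
        · subst hd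
          have hcc : ∀ k, MvPolynomial.constantCoeff ((g' 0 - gsol A v 0) k) = 0 := by
            intro k
            have hv1 : MvPolynomial.constantCoeff (g' 0 k) = v k := congrFun h2' k
            have hv2 : MvPolynomial.constantCoeff (gsol A v 0 k) = v k := by
              rw [gsol_zero]
              exact congrFun (cc_g0 A v hn) k
            rw [Pi.sub_apply, map_sub, hv1, hv2, sub_self]
          have heq0 : ∀ j : Fin l, DV j (g' 0 - gsol A v 0)
              = BV (A j 0) (g' 0 - gsol A v 0) := by
            intro j
            have := hsub j
            have hz : (((0 : Fin l →₀ ℕ) j : ℕ) : R) = 0 := by simp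
            rwa [hz, zero_smul, add_zero] at this
          exact sub_eq_zero.mp (zero_of_deg_zero_eq A hc1 heq0 hcc)
        · obtain ⟨j, hj⟩ := Finsupp.ne_iff.mp hd
          simp only [Finsupp.coe_zero, Pi.zero_apply] at hj
          have hpos : 0 < d j := Nat.pos_of_ne_zero hj
          have hAn : (A j 0) ^ n = 0 := slt_pow_n (fun a b hab => hc1 j a b hab)
          have hzero : g' d - gsol A v d = 0 := by
            apply solve_unique j hpos (A j 0) hAn
            rw [NL_apply]
            calc ((d j : ℕ) : R) • (g' d - gsol A v d)
                = (DV j (g' d - gsol A v d) + ((d j : ℕ) : R) • (g' d - gsol A v d))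
                  - DV j (g' d - gsol A v d) := by abel
              _ = BV (A j 0) (g' d - gsol A v d) - DV j (g' d - gsol A v d) := by
                  rw [hsub j]
          exact sub_eq_zero.mp hzero
    funext d
    exact main (wt d + 1) d (by omega)
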